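/- Let λ : Ω → ℝ be twice continuously differentiable on a connected open set Ω ⊆ ℝ^q with negative definite Hessian at every point, and suppose ∇λ vanishes at some point θ̂ ∈ Ω. Then λ is strictly concave, θ̂ is the unique maximizer of λ on Ω, and λ has no other stationary points in Ω. -/

import Mathlib

open Set

/-- Auxiliary: line restriction of `lam` is strictly concave on `[0,1]`, and its
directional derivative along the line is strictly antitone. -/
lemma msS_line {q : ℕ}
    (Ω : Set (EuclideanSpace ℝ (Fin q))) (hΩ : IsOpen Ω)
    (hΩconv : Convex ℝ Ω)
    (lam : EuclideanSpace ℝ (Fin q) → ℝ)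
    (hC2 : ContDiffOn ℝ 2 lam Ω)
    (H : EuclideanSpace ℝ (Fin q) →
      EuclideanSpace ℝ (Fin q) →L[ℝ] EuclideanSpace ℝ (Fin q) →L[ℝ] ℝ)
    (hH : ∀ θ ∈ Ω, HasFDerivAt (fun θ' => fderiv ℝ lam θ') (H θ) θ)
    (hND : ∀ θ ∈ Ω, ∀ v, v ≠ 0 → H θ v v < 0)
    (x y : EuclideanSpace ℝ (Fin q)) (hx : x ∈ Ω) (hy : y ∈ Ω) (hxy : x ≠ y) :
    StrictConcaveOn ℝ (Icc (0:ℝ) 1) (fun t => lam (x + t • (y - x))) ∧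
      StrictAntiOn (fun t => (fderiv ℝ lam (x + t • (y - x))) (y - x)) (Icc (0:ℝ) 1) := by
  set d : EuclideanSpace ℝ (Fin q) := y - x with hd
  have hdne : d ≠ 0 := sub_ne_zero.mpr (Ne.symm hxy)
  set L : ℝ → EuclideanSpace ℝ (Fin q) := fun t => x + t • d with hLdef
  have hdiff : ∀ z ∈ Ω, DifferentiableAt ℝ lam z := fun z hz =>
    (hC2.differentiableOn two_ne_zero).differentiableAt (hΩ.mem_nhds hz)
  have hL : ∀ t : ℝ, HasDerivAt L d t := fun t => by
    exact (((hasDerivAt_id t).smul_const d).const_add x).congr_deriv (one_smul ℝ d)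
  have hLmem : ∀ t ∈ Icc (0:ℝ) 1, L t ∈ Ω := fun t ht =>
    hΩconv.add_smul_sub_mem hx hy ht
  set g : ℝ → ℝ := fun t => lam (L t) with hgdef
  set g1 : ℝ → ℝ := fun t => (fderiv ℝ lam (L t)) d with hg1def
  have hg : ∀ t : ℝ, L t ∈ Ω → HasDerivAt g (g1 t) t := fun t ht =>
    (hdiff _ ht).hasFDerivAt.comp_hasDerivAt t (hL t)
  have hg1 : ∀ t : ℝ, L t ∈ Ω → HasDerivAt g1 (H (L t) d d) t := by
    intro t ht
    have h1 : HasDerivAt (fun s => fderiv ℝ lam (L s)) (H (L t) d) t :=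
      (hH _ ht).comp_hasDerivAt t (hL t)
    have h2 := h1.clm_apply (hasDerivAt_const t d)
    simpa using h2
  have hanti : StrictAntiOn g1 (Icc (0:ℝ) 1) := by
    apply strictAntiOn_of_deriv_neg (convex_Icc 0 1)
    · intro t ht
      exact (hg1 t (hLmem t ht)).continuousAt.continuousWithinAt
    · intro t ht
      rw [interior_Icc] at ht
      have htΩ : L t ∈ Ω := hLmem t (Ioo_subset_Icc_self ht)
      rw [(hg1 t htΩ).deriv]
      exact hND _ htΩ d hdne
  refine ⟨?_, hanti⟩
  apply strictConcaveOn_of_deriv2_neg (convex_Icc 0 1)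
  · intro t ht
    exact (hg t (hLmem t ht)).continuousAt.continuousWithinAt
  · intro t ht
    rw [interior_Icc] at ht
    have htΩ : L t ∈ Ω := hLmem t (Ioo_subset_Icc_self ht)
    have hS : IsOpen (L ⁻¹' Ω) :=
      hΩ.preimage (continuous_const.add (continuous_id.smul continuous_const))
    have hEq : deriv g =ᶠ[nhds t] g1 := by
      filter_upwards [hS.mem_nhds htΩ] with s hs using (hg s hs).deriv
    have h2 : deriv^[2] g t = deriv (deriv g) t := rfl
    rw [h2, hEq.deriv_eq, (hg1 t htΩ).deriv]
    exact hND _ htΩ d hdne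

/-- Auxiliary: any stationary point is a strict global maximizer. -/
lemma msS_max {q : ℕ}
    (Ω : Set (EuclideanSpace ℝ (Fin q))) (hΩ : IsOpen Ω)
    (hΩconv : Convex ℝ Ω)
    (lam : EuclideanSpace ℝ (Fin q) → ℝ)
    (hC2 : ContDiffOn ℝ 2 lam Ω)
    (H : EuclideanSpace ℝ (Fin q) →
      EuclideanSpace ℝ (Fin q) →L[ℝ] EuclideanSpace ℝ (Fin q) →L[ℝ] ℝ)
    (hH : ∀ θ ∈ Ω, HasFDerivAt (fun θ' => fderiv ℝ lam θ') (H θ) θ)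
    (hND : ∀ θ ∈ Ω, ∀ v, v ≠ 0 → H θ v v < 0)
    (θ0 : EuclideanSpace ℝ (Fin q)) (hθ0 : θ0 ∈ Ω)
    (hstat0 : fderiv ℝ lam θ0 = 0)
    (θ : EuclideanSpace ℝ (Fin q)) (hθ : θ ∈ Ω) (hne : θ ≠ θ0) :
    lam θ < lam θ0 := by
  obtain ⟨-, hanti⟩ :=
    msS_line Ω hΩ hΩconv lam hC2 H hH hND θ0 θ hθ0 hθ (Ne.symm hne)
  set d : EuclideanSpace ℝ (Fin q) := θ - θ0 with hd
  set L : ℝ → EuclideanSpace ℝ (Fin q) := fun t => θ0 + t • d with hLdef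
  have hdiff : ∀ z ∈ Ω, DifferentiableAt ℝ lam z := fun z hz =>
    (hC2.differentiableOn two_ne_zero).differentiableAt (hΩ.mem_nhds hz)
  have hL : ∀ t : ℝ, HasDerivAt L d t := fun t => by
    exact (((hasDerivAt_id t).smul_const d).const_add θ0).congr_deriv (one_smul ℝ d)
  have hLmem : ∀ t ∈ Icc (0:ℝ) 1, L t ∈ Ω := fun t ht =>
    hΩconv.add_smul_sub_mem hθ0 hθ ht
  set g : ℝ → ℝ := fun t => lam (L t) with hgdef
  set g1 : ℝ → ℝ := fun t => (fderiv ℝ lam (L t)) d with hg1def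
  have hg : ∀ t ∈ Icc (0:ℝ) 1, HasDerivAt g (g1 t) t := fun t ht =>
    (hdiff _ (hLmem t ht)).hasFDerivAt.comp_hasDerivAt t (hL t)
  have hg10 : g1 0 = 0 := by
    simp [hg1def, hLdef, hstat0]
  obtain ⟨c, hc, hceq⟩ :=
    exists_hasDerivAt_eq_slope g g1 (by norm_num : (0:ℝ) < 1)
      (fun t ht => (hg t ht).continuousAt.continuousWithinAt)
      (fun t ht => hg t (Ioo_subset_Icc_self ht))
  have hneg : g1 c < 0 := by
    have := hanti (left_mem_Icc.mpr zero_le_one) (Ioo_subset_Icc_self hc) hc.1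
    rwa [hg10] at this
  rw [hceq] at hneg
  have h10 : g 1 < g 0 := by
    have : g 1 - g 0 < 0 := by
      have h : (g 1 - g 0) / (1 - 0) < 0 := hneg
      linarith [h, (by norm_num : (1:ℝ) - 0 = 1)]
    linarith
  have hg0 : g 0 = lam θ0 := by simp [hgdef, hLdef]
  have hg1' : g 1 = lam θ := by simp [hgdef, hLdef, hd]
  rw [hg0, hg1'] at h10
  exact h10

/-- Mäkeläinen–Schmidt–Styan uniqueness theorem: if
`λ : Ω → ℝ` is twice continuously differentiable on a connected open (convex)
set `Ω ⊆ ℝ^q`, with Hessian `H(θ)` negative definite at every point, and the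
gradient vanishes at `θ̂ ∈ Ω`, then `λ` is strictly concave on `Ω`, `θ̂` is the
unique maximizer of `λ` on `Ω`, and `λ` has no other stationary points. -/
theorem stmt15 {q : ℕ}
    (Ω : Set (EuclideanSpace ℝ (Fin q))) (hΩ : IsOpen Ω)
    (hΩconn : IsConnected Ω) (hΩconv : Convex ℝ Ω)
    (lam : EuclideanSpace ℝ (Fin q) → ℝ)
    (hC2 : ContDiffOn ℝ 2 lam Ω)
    (H : EuclideanSpace ℝ (Fin q) →
      EuclideanSpace ℝ (Fin q) →L[ℝ] EuclideanSpace ℝ (Fin q) →L[ℝ] ℝ)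
    (hH : ∀ θ ∈ Ω, HasFDerivAt (fun θ' => fderiv ℝ lam θ') (H θ) θ)
    (hND : ∀ θ ∈ Ω, ∀ v, v ≠ 0 → H θ v v < 0)
    (θh : EuclideanSpace ℝ (Fin q)) (hθh : θh ∈ Ω)
    (hstat : fderiv ℝ lam θh = 0) :
    StrictConcaveOn ℝ Ω lam ∧
      (∀ θ ∈ Ω, θ ≠ θh → lam θ < lam θh) ∧
      (∀ θ ∈ Ω, fderiv ℝ lam θ = 0 → θ = θh) := by
  have hmax : ∀ θ ∈ Ω, θ ≠ θh → lam θ < lam θh := fun θ hθ hne =>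
    msS_max Ω hΩ hΩconv lam hC2 H hH hND θh hθh hstat θ hθ hne
  refine ⟨⟨hΩconv, ?_⟩, hmax, ?_⟩
  · intro x hx y hy hxy a b ha hb hab
    obtain ⟨hconc, -⟩ :=
      msS_line Ω hΩ hΩconv lam hC2 H hH hND x y hx hy hxy
    have h0 : (0:ℝ) ∈ Icc (0:ℝ) 1 := left_mem_Icc.mpr zero_le_one
    have h1 : (1:ℝ) ∈ Icc (0:ℝ) 1 := right_mem_Icc.mpr zero_le_one
    have := hconc.2 h0 h1 (by norm_num) ha hb hab
    have hval : x + (a • (0:ℝ) + b • (1:ℝ)) • (y - x) = a • x + b • y := by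
      have : a = 1 - b := by linarith
      rw [this]
      simp [smul_sub, sub_smul]
      abel
    have h0p : x + (0:ℝ) • (y - x) = x := by simp
    have h1p : x + (1:ℝ) • (y - x) = y := by simp
    simp only at this
    rw [h0p, h1p, hval] at this
    exact this
  · intro θ hθ hstatθ
    by_contra hne
    have h1 := hmax θ hθ hne
    have h2 := msS_max Ω hΩ hΩconv lam hC2 H hH hND θ hθ hstatθ θh hθh (Ne.symm hne)
    linarith
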